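/- (Monotonicity of the multiresource multiserver-job map.) Fix T ≥ 1 resource types with capacities s_1, …, s_T ≥ 1, a demand vector ᾱ = (α^1, …, α^T) with 1 ≤ α^j ≤ s_j for each j, and σ, τ ≥ 0. The MMJSRE one-step map sending a T-tuple of ordered vectors W̄ = (W_1, …, W_T), W_j ∈ ℝ^{s_j}, to R(S̄(ᾱ, W̄) + σ·L̄(ᾱ) − τ·U)^+ is coordinatewise nondecreasing: if W̄ ≤ W̄' (meaning W_j ≤ W'_j coordinatewise for each j), then the images satisfy the same inequality. -/

import Mathlib

/-- The nondecreasing rearrangement operator `R` on vectors of ℝ^s. -/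
noncomputable def sortVec {s : ℕ} (v : Fin s → ℝ) : Fin s → ℝ := v ∘ Tuple.sort v

/-- A tuple of vectors is ordered if each component vector has nondecreasing
nonnegative coordinates. -/
def MIsOrdered {T : ℕ} {sv : Fin T → ℕ} (W : ∀ j, Fin (sv j) → ℝ) : Prop :=
  ∀ j, Monotone (W j) ∧ ∀ i, 0 ≤ W j i

/-- The one-step MMJSRE map: component `j` is
`R(S̄_j(ᾱ,W̄) + σ·L(α^j) − τ·U)⁺`, where `S̄_j(ᾱ,W̄)^i = max_{j'} W_{j'}^{α^{j'}}` for
`i ≤ α^j` and `W_j^i` otherwise, and `L(α^j)^i = 1` for `i ≤ α^j`, `0` otherwise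
(indices 0-based, `α j : Fin (sv j)` representing the demand `α^j ∈ {1,…,s_j}`). -/
noncomputable def MPhi {T : ℕ} {sv : Fin T → ℕ} (α : ∀ j, Fin (sv j)) (σ τ : ℝ)
    (W : ∀ j, Fin (sv j) → ℝ) : ∀ j, Fin (sv j) → ℝ :=
  fun j => sortVec (fun i =>
    max ((if i ≤ α j then ⨆ j', W j' (α j') else W j i)
        + σ * (if i ≤ α j then 1 else 0) - τ) 0)

/-- Card of sublevel sets is invariant under sorting. -/
lemma card_sortVec_le {s : ℕ} (v : Fin s → ℝ) (a : ℝ) :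
    Fintype.card {i // sortVec v i ≤ a} = Fintype.card {i // v i ≤ a} :=
  Fintype.card_congr <| (Tuple.sort v).subtypeEquiv fun _ => Iff.rfl

/-- The nondecreasing rearrangement is monotone as a map on vectors. -/
lemma sortVec_mono {s : ℕ} {v w : Fin s → ℝ} (h : ∀ i, v i ≤ w i) :
    ∀ i, sortVec v i ≤ sortVec w i := by
  intro j
  have hv : Monotone (sortVec v) := Tuple.monotone_sort v
  have hw : Monotone (sortVec w) := Tuple.monotone_sort w
  set a := sortVec w j with ha
  rw [← Tuple.lt_card_le_iff_apply_le_of_monotone (j := j) (a := a) hv, ← Fintype.card_subtype]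
  have h1 : (j : ℕ) < Fintype.card {i // sortVec w i ≤ a} :=
    by rw [Fintype.card_subtype]; exact (Tuple.lt_card_le_iff_apply_le_of_monotone (j := j) (a := a) hw).2 le_rfl
  refine h1.trans_le ?_
  rw [card_sortVec_le, card_sortVec_le]
  exact Fintype.card_subtype_mono _ _ fun i hi => (h i).trans hi

/-- Monotonicity of the multiresource multiserver-job one-step map: if `W̄ ≤ W̄'`
componentwise (both ordered), then `MPhi ᾱ σ τ W̄ ≤ MPhi ᾱ σ τ W̄'` componentwise. -/
theorem MPhi_mono (T : ℕ) (hT : 0 < T) (sv : Fin T → ℕ) (hsv : ∀ j, 0 < sv j)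
    (α : ∀ j, Fin (sv j)) (σ τ : ℝ) (hσ : 0 ≤ σ) (hτ : 0 ≤ τ)
    (W W' : ∀ j, Fin (sv j) → ℝ) (hW : MIsOrdered W) (hW' : MIsOrdered W')
    (hle : ∀ j i, W j i ≤ W' j i) :
    ∀ j i, MPhi α σ τ W j i ≤ MPhi α σ τ W' j i := by
  intro j i
  apply sortVec_mono
  intro k
  have hsup : (⨆ j', W j' (α j')) ≤ ⨆ j', W' j' (α j') := by
    haveI : Nonempty (Fin T) := ⟨⟨0, hT⟩⟩
    exact ciSup_mono (Set.Finite.bddAbove (Set.finite_range _)) fun j' => hle j' (α j')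
  gcongr
  split <;> [exact hsup; exact hle j k]
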